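/- For any control function u : ℝ³ → ℝ that is continuous in all variables and locally Lipschitz in (q,p), and for any t₀ ∈ ℝ, there exists an initial condition (q₀, p₀) with 0 < q₀ < π such that every solution (q(t), p(t)) of the system q̇ = p, ṗ = u(q,p,t)·sin q − cos q with (q(t₀), p(t₀)) = (q₀, p₀) satisfies 0 < q(t) < π for all t ≥ t₀ in its interval of existence (i.e. the pendulum never falls along this solution). -/

import Mathlib

open Real Set Filter Topology

namespace InvPend

/-- The vector field of the controlled inverted pendulum. -/
noncomputable def vf (u : ℝ → ℝ → ℝ → ℝ) (t : ℝ) (z : ℝ × ℝ) : ℝ × ℝ :=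
  (z.2, u z.1 z.2 t * Real.sin z.1 - Real.cos z.1)

/-- `f` is a solution on `[a,b]`. -/
def IsSol (u : ℝ → ℝ → ℝ → ℝ) (a b : ℝ) (f : ℝ → ℝ × ℝ) : Prop :=
  ∀ t ∈ Icc a b, HasDerivWithinAt f (vf u t (f t)) (Icc a b) t

/-- Admissible control. -/
def Adm (u : ℝ → ℝ → ℝ → ℝ) : Prop :=
  Continuous (fun x : ℝ × ℝ × ℝ => u x.1 x.2.1 x.2.2) ∧
  ∀ K : Set (ℝ × ℝ × ℝ), IsCompact K → ∃ L : ℝ,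
      ∀ a ∈ K, ∀ b ∈ K, a.2.2 = b.2.2 →
        |u a.1 a.2.1 a.2.2 - u b.1 b.2.1 b.2.2| ≤
          L * dist ((a.1, a.2.1) : ℝ × ℝ) ((b.1, b.2.1) : ℝ × ℝ)

/-- clamp -/
def cl (lo hi x : ℝ) : ℝ := max lo (min hi x)

lemma cl_mem {lo hi : ℝ} (h : lo ≤ hi) (x : ℝ) : cl lo hi x ∈ Icc lo hi := by
  constructor
  · exact le_max_left _ _
  · exact max_le h (min_le_left _ _)

lemma cl_eq_self {lo hi x : ℝ} (h1 : lo ≤ x) (h2 : x ≤ hi) : cl lo hi x = x := by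
  rw [cl, min_eq_right h2, max_eq_right h1]

lemma cl_lip (lo hi x y : ℝ) : |cl lo hi x - cl lo hi y| ≤ |x - y| := by
  rw [cl, cl]
  calc |max lo (min hi x) - max lo (min hi y)|
      = |max (min hi x) lo - max (min hi y) lo| := by rw [max_comm lo, max_comm lo]
    _ ≤ |min hi x - min hi y| := abs_max_sub_max_le_abs _ _ _
    _ ≤ max |hi - hi| |x - y| := abs_min_sub_min_le_max _ _ _ _
    _ ≤ |x - y| := by simp

lemma cl_nonpos {lo hi x : ℝ} (hlo : lo ≤ 0) (hx : x ≤ 0) : cl lo hi x ≤ 0 :=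
  max_le hlo (le_trans (min_le_right _ _) hx)

/-- fst of a curve derivative -/
lemma hdw_fst {f : ℝ → ℝ × ℝ} {d : ℝ × ℝ} {s : Set ℝ} {t : ℝ}
    (h : HasDerivWithinAt f d s t) : HasDerivWithinAt (fun s => (f s).1) d.1 s t := by
  have := (ContinuousLinearMap.fst ℝ ℝ ℝ).hasFDerivAt.comp_hasDerivWithinAt t h
  simpa [Function.comp_def] using this

lemma hdw_snd {f : ℝ → ℝ × ℝ} {d : ℝ × ℝ} {s : Set ℝ} {t : ℝ}
    (h : HasDerivWithinAt f d s t) : HasDerivWithinAt (fun s => (f s).2) d.2 s t := by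
  have := (ContinuousLinearMap.snd ℝ ℝ ℝ).hasFDerivAt.comp_hasDerivWithinAt t h
  simpa [Function.comp_def] using this

lemma contOn_of_hdw {f : ℝ → ℝ × ℝ} {d : ℝ → ℝ × ℝ} {s : Set ℝ}
    (h : ∀ t ∈ s, HasDerivWithinAt f (d t) s t) : ContinuousOn f s :=
  fun t ht => (h t ht).continuousWithinAt

lemma IsSol.continuousOn {u a b f} (h : IsSol u a b f) : ContinuousOn f (Icc a b) :=
  contOn_of_hdw h

lemma IsSol.mono {u a b f} (h : IsSol u a b f) {a' b'} (h1 : Icc a' b' ⊆ Icc a b) :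
    IsSol u a' b' f := fun t ht => ((h t (h1 ht)).mono h1)

/-- upgrade derivative within `Icc a b` to within `Ici t` for `t ∈ Ico a b`. -/
lemma hdw_Ici {E : Type*} [NormedAddCommGroup E] [NormedSpace ℝ E] {f : ℝ → E} {d : E}
    {a b t : ℝ} (ht : t ∈ Ico a b) (h : HasDerivWithinAt f d (Icc a b) t) :
    HasDerivWithinAt f d (Ici t) t := by
  have h1 : HasDerivWithinAt f d (Icc t b) t := h.mono (Icc_subset_Icc ht.1 le_rfl)
  rw [← Ici_inter_Iic] at h1
  exact (hasDerivWithinAt_inter (Iic_mem_nhds ht.2)).mp h1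

/-- monotone from nonneg derivative -/
lemma mono_help {φ ψ : ℝ → ℝ} {a b : ℝ}
    (h : ∀ t ∈ Icc a b, HasDerivWithinAt φ (ψ t) (Icc a b) t)
    (hn : ∀ t ∈ Ioo a b, 0 ≤ ψ t) : MonotoneOn φ (Icc a b) := by
  have hc : ContinuousOn φ (Icc a b) := fun t ht => (h t ht).continuousWithinAt
  have hd : ∀ t ∈ Ioo a b, HasDerivAt φ (ψ t) t := fun t ht =>
    (h t (Ioo_subset_Icc_self ht)).hasDerivAt (Icc_mem_nhds ht.1 ht.2)
  refine monotoneOn_of_deriv_nonneg (convex_Icc a b) hc (fun t ht => ?_) (fun t ht => ?_)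
  · rw [interior_Icc] at ht
    exact (hd t ht).differentiableAt.differentiableWithinAt
  · rw [interior_Icc] at ht
    rw [(hd t ht).deriv]
    exact hn t ht

lemma anti_help {φ ψ : ℝ → ℝ} {a b : ℝ}
    (h : ∀ t ∈ Icc a b, HasDerivWithinAt φ (ψ t) (Icc a b) t)
    (hn : ∀ t ∈ Ioo a b, ψ t ≤ 0) : AntitoneOn φ (Icc a b) := by
  have hc : ContinuousOn φ (Icc a b) := fun t ht => (h t ht).continuousWithinAt
  have hd : ∀ t ∈ Ioo a b, HasDerivAt φ (ψ t) t := fun t ht =>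
    (h t (Ioo_subset_Icc_self ht)).hasDerivAt (Icc_mem_nhds ht.1 ht.2)
  refine antitoneOn_of_deriv_nonpos (convex_Icc a b) hc (fun t ht => ?_) (fun t ht => ?_)
  · rw [interior_Icc] at ht
    exact (hd t ht).differentiableAt.differentiableWithinAt
  · rw [interior_Icc] at ht
    rw [(hd t ht).deriv]
    exact hn t ht

/-- generic first hitting time of a closed set -/
lemma first_exit {φ : ℝ → ℝ} {a b : ℝ} {A : Set ℝ} (hab : a ≤ b)
    (hφ : ContinuousOn φ (Icc a b)) (hA : IsClosed A) (hb : φ b ∈ A) :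
    ∃ T ∈ Icc a b, φ T ∈ A ∧ ∀ s, a ≤ s → s < T → φ s ∉ A := by
  set S : Set ℝ := Icc a b ∩ φ ⁻¹' A with hS
  have hSc : IsClosed S := hφ.preimage_isClosed_of_isClosed isClosed_Icc hA
  have hSne : S.Nonempty := ⟨b, ⟨hab, le_rfl⟩, hb⟩
  have hBdd : BddBelow S := ⟨a, fun s hs => hs.1.1⟩
  refine ⟨sInf S, (hSc.csInf_mem hSne hBdd).1, (hSc.csInf_mem hSne hBdd).2, ?_⟩
  intro s hs hsT hsA
  have hsb : s ≤ b := le_trans hsT.le (hSc.csInf_mem hSne hBdd).1.2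
  exact notMem_of_lt_csInf hsT hBdd ⟨⟨hs, hsb⟩, hsA⟩

/-- first time a continuous function hits `0` from above -/
lemma exit_zero {φ : ℝ → ℝ} {a b : ℝ} (hab : a ≤ b) (hφ : ContinuousOn φ (Icc a b))
    (ha : 0 < φ a) (hb : φ b ≤ 0) :
    ∃ T, a < T ∧ T ≤ b ∧ φ T = 0 ∧ ∀ s, a ≤ s → s < T → 0 < φ s := by
  obtain ⟨T, hT, hTA, hmin⟩ := first_exit hab hφ isClosed_Iic (mem_Iic.mpr hb)
  have hpos : ∀ s, a ≤ s → s < T → 0 < φ s := by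
    intro s h1 h2
    have := hmin s h1 h2
    simpa [not_le] using this
  have haT : a < T := by
    rcases eq_or_lt_of_le hT.1 with h | h
    · exfalso; rw [← h] at hTA; exact absurd (mem_Iic.mp hTA) (not_le.mpr ha)
    · exact h
  have hTge : 0 ≤ φ T := by
    have hne : (𝓝[Ico a T] T).NeBot := by
      rw [← mem_closure_iff_nhdsWithin_neBot, closure_Ico haT.ne, mem_Icc]
      exact ⟨haT.le, le_rfl⟩
    have hcw : ContinuousWithinAt φ (Ico a T) T :=
      (hφ T ⟨haT.le, hT.2⟩).mono (fun s hs => ⟨hs.1, hs.2.le.trans hT.2⟩)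
    refine ge_of_tendsto hcw ?_
    exact eventually_nhdsWithin_of_forall (fun s hs => (hpos s hs.1 hs.2).le)
  exact ⟨T, haT, hT.2, le_antisymm (mem_Iic.mp hTA) hTge, hpos⟩


lemma abs_sin_sub_le (x y : ℝ) : |Real.sin x - Real.sin y| ≤ |x - y| := by
  rw [Real.sin_sub_sin, abs_mul, abs_mul, abs_two]
  have h1 : |Real.sin ((x - y) / 2)| ≤ |(x - y) / 2| := Real.abs_sin_le_abs
  have h2 : |Real.cos ((x + y) / 2)| ≤ 1 := Real.abs_cos_le_one _
  have h3 : |(x - y) / 2| = |x - y| / 2 := by rw [abs_div, abs_two]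
  rw [h3] at h1
  nlinarith [abs_nonneg (Real.sin ((x - y) / 2)), abs_nonneg (x - y)]

lemma abs_cos_sub_le (x y : ℝ) : |Real.cos x - Real.cos y| ≤ |x - y| := by
  rw [Real.cos_sub_cos, abs_mul, abs_mul, abs_neg, abs_two]
  have h1 : |Real.sin ((x - y) / 2)| ≤ |(x - y) / 2| := Real.abs_sin_le_abs
  have h2 : |Real.sin ((x + y) / 2)| ≤ 1 := Real.abs_sin_le_one _
  have h3 : |(x - y) / 2| = |x - y| / 2 := by rw [abs_div, abs_two]
  rw [h3] at h1
  nlinarith [abs_nonneg (Real.sin ((x - y) / 2)), abs_nonneg (x - y)]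

/-- The clamped vector field. -/
noncomputable def clW (u : ℝ → ℝ → ℝ → ℝ) (qlo qhi plo phi a b : ℝ)
    (t : ℝ) (z : ℝ × ℝ) : ℝ × ℝ :=
  vf u (cl a b t) (cl qlo qhi z.1, cl plo phi z.2)

lemma clW_eq_vf {u qlo qhi plo phi a b t} {z : ℝ × ℝ} (ht : t ∈ Icc a b)
    (h1 : z.1 ∈ Icc qlo qhi) (h2 : z.2 ∈ Icc plo phi) :
    clW u qlo qhi plo phi a b t z = vf u t z := by
  rw [clW, cl_eq_self ht.1 ht.2, cl_eq_self h1.1 h1.2, cl_eq_self h2.1 h2.2]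

lemma clW_fst (u qlo qhi plo phi a b t) (z : ℝ × ℝ) :
    (clW u qlo qhi plo phi a b t z).1 = cl plo phi z.2 := rfl

lemma clW_snd (u qlo qhi plo phi a b t) (z : ℝ × ℝ) :
    (clW u qlo qhi plo phi a b t z).2 =
      u (cl qlo qhi z.1) (cl plo phi z.2) (cl a b t) * Real.sin (cl qlo qhi z.1)
        - Real.cos (cl qlo qhi z.1) := rfl

/-- All analytic properties of the clamped field. -/
lemma clW_props {u : ℝ → ℝ → ℝ → ℝ} (hu : Adm u) {qlo qhi plo phi a b : ℝ}
    (hq : qlo ≤ qhi) (hp : plo ≤ phi) (hab : a ≤ b) :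
    ∃ (K : NNReal) (C : ℝ), 1 ≤ C ∧
      (∀ t, LipschitzWith K (clW u qlo qhi plo phi a b t)) ∧
      (∀ z, Continuous fun t => clW u qlo qhi plo phi a b t z) ∧
      (∀ t z, ‖clW u qlo qhi plo phi a b t z‖ ≤ C) := by
  obtain ⟨hc, hl⟩ := hu
  set D : Set (ℝ × ℝ × ℝ) := Icc qlo qhi ×ˢ Icc plo phi ×ˢ Icc a b with hD
  have hDc : IsCompact D := (isCompact_Icc).prod ((isCompact_Icc).prod isCompact_Icc)
  obtain ⟨M0, hM0⟩ := hDc.exists_bound_of_continuousOn hc.continuousOn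
  obtain ⟨L0, hL0⟩ := hl D hDc
  set M := max M0 0 with hM
  set L := max L0 0 with hL
  have hMnn : 0 ≤ M := le_max_right _ _
  have hLnn : 0 ≤ L := le_max_right _ _
  have hmemD : ∀ (t : ℝ) (z : ℝ × ℝ),
      (cl qlo qhi z.1, cl plo phi z.2, cl a b t) ∈ D := by
    intro t z
    exact ⟨cl_mem hq _, cl_mem hp _, cl_mem hab _⟩
  have hMbd : ∀ (t : ℝ) (z : ℝ × ℝ),
      |u (cl qlo qhi z.1) (cl plo phi z.2) (cl a b t)| ≤ M := by
    intro t z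
    have := hM0 _ (hmemD t z)
    simp only [Real.norm_eq_abs] at this
    exact this.trans (le_max_left _ _)
  have hKv : (((M + L + 2).toNNReal : NNReal) : ℝ) = M + L + 2 :=
    Real.coe_toNNReal _ (by positivity)
  refine ⟨(M + L + 2).toNNReal, max (max |plo| |phi|) (M + 1), ?_, ?_, ?_, ?_⟩
  · exact le_max_of_le_right (by linarith)
  · -- Lipschitz
    intro t
    rw [lipschitzWith_iff_dist_le_mul]
    intro z w
    rw [Prod.dist_eq, hKv]
    have hdz : dist z w = max |z.1 - w.1| |z.2 - w.2| := by
      rw [Prod.dist_eq, Real.dist_eq, Real.dist_eq]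
    have h1w : |z.1 - w.1| ≤ dist z w := by rw [hdz]; exact le_max_left _ _
    have h2w : |z.2 - w.2| ≤ dist z w := by rw [hdz]; exact le_max_right _ _
    have hdnn : 0 ≤ dist z w := dist_nonneg
    refine max_le ?_ ?_
    · -- first components
      rw [clW_fst, clW_fst, Real.dist_eq]
      calc |cl plo phi z.2 - cl plo phi w.2| ≤ |z.2 - w.2| := cl_lip _ _ _ _
        _ ≤ dist z w := h2w
        _ ≤ (M + L + 2) * dist z w := by nlinarith
    · rw [clW_snd, clW_snd, Real.dist_eq]
      set q1 := cl qlo qhi z.1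
      set q2 := cl qlo qhi w.1
      set p1 := cl plo phi z.2
      set p2 := cl plo phi w.2
      set s := cl a b t
      have hq12 : |q1 - q2| ≤ dist z w := (cl_lip _ _ _ _).trans h1w
      have hp12 : |p1 - p2| ≤ dist z w := (cl_lip _ _ _ _).trans h2w
      have hu1 : |u q1 p1 s| ≤ M := hMbd t z
      have hdu : |u q1 p1 s - u q2 p2 s| ≤ L * dist ((q1, p1) : ℝ × ℝ) ((q2, p2) : ℝ × ℝ) := by
        have := hL0 (q1, p1, s) (hmemD t z) (q2, p2, s) (hmemD t w) rfl
        refine this.trans ?_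
        have : L0 ≤ L := le_max_left _ _
        nlinarith [dist_nonneg (x := ((q1, p1) : ℝ × ℝ)) (y := ((q2, p2) : ℝ × ℝ))]
      have hdist2 : dist ((q1, p1) : ℝ × ℝ) ((q2, p2) : ℝ × ℝ) ≤ dist z w := by
        rw [Prod.dist_eq, Real.dist_eq, Real.dist_eq]
        exact max_le hq12 hp12
      have hsin : |Real.sin q1 - Real.sin q2| ≤ |q1 - q2| := abs_sin_sub_le _ _
      have hcos : |Real.cos q1 - Real.cos q2| ≤ |q1 - q2| := abs_cos_sub_le _ _
      have hsin2 : |Real.sin q2| ≤ 1 := Real.abs_sin_le_one q2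
      calc |u q1 p1 s * Real.sin q1 - Real.cos q1 - (u q2 p2 s * Real.sin q2 - Real.cos q2)|
          ≤ |u q1 p1 s * Real.sin q1 - u q2 p2 s * Real.sin q2| + |Real.cos q1 - Real.cos q2| := by
            have : u q1 p1 s * Real.sin q1 - Real.cos q1 - (u q2 p2 s * Real.sin q2 - Real.cos q2)
              = (u q1 p1 s * Real.sin q1 - u q2 p2 s * Real.sin q2)
                - (Real.cos q1 - Real.cos q2) := by ring
            rw [this]; exact abs_sub _ _
        _ ≤ |u q1 p1 s| * |Real.sin q1 - Real.sin q2| + |Real.sin q2| * |u q1 p1 s - u q2 p2 s|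
              + |Real.cos q1 - Real.cos q2| := by
            have : u q1 p1 s * Real.sin q1 - u q2 p2 s * Real.sin q2
              = u q1 p1 s * (Real.sin q1 - Real.sin q2) + Real.sin q2 * (u q1 p1 s - u q2 p2 s) := by
                ring
            rw [this]
            have h := abs_add_le (u q1 p1 s * (Real.sin q1 - Real.sin q2))
              (Real.sin q2 * (u q1 p1 s - u q2 p2 s))
            rw [abs_mul, abs_mul] at h
            linarith
        _ ≤ M * dist z w + 1 * (L * dist z w) + dist z w := by
            have e1 : |u q1 p1 s| * |Real.sin q1 - Real.sin q2| ≤ M * dist z w := by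
              have := hsin.trans hq12
              nlinarith [abs_nonneg (u q1 p1 s), abs_nonneg (Real.sin q1 - Real.sin q2)]
            have e2 : |Real.sin q2| * |u q1 p1 s - u q2 p2 s| ≤ 1 * (L * dist z w) := by
              have h3 : |u q1 p1 s - u q2 p2 s| ≤ L * dist z w := by
                refine hdu.trans ?_
                nlinarith
              nlinarith [abs_nonneg (u q1 p1 s - u q2 p2 s)]
            have e3 : |Real.cos q1 - Real.cos q2| ≤ dist z w := hcos.trans hq12
            linarith
        _ ≤ (M + L + 2) * dist z w := by nlinarith
  · -- continuity in t
    intro z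
    have : Continuous fun t : ℝ => cl a b t := by
      rw [show (fun t : ℝ => cl a b t) = fun t : ℝ => max a (min b t) from rfl]
      exact continuous_const.max (continuous_const.min continuous_id)
    have hcont : Continuous fun t : ℝ =>
        u (cl qlo qhi z.1) (cl plo phi z.2) (cl a b t) := by
      have h2 := hc.comp (continuous_const.prodMk (continuous_const.prodMk this) :
        Continuous fun t : ℝ => ((cl qlo qhi z.1, cl plo phi z.2, cl a b t) : ℝ × ℝ × ℝ))
      simpa [Function.comp_def] using h2
    unfold clW vf
    exact continuous_const.prodMk
      ((hcont.mul continuous_const).sub continuous_const)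
  · -- bound
    intro t z
    rw [Prod.norm_def]
    refine max_le ?_ ?_
    · rw [clW_fst, Real.norm_eq_abs]
      have hm := cl_mem hp z.2
      exact le_max_of_le_left (abs_le_max_abs_abs hm.1 hm.2)
    · rw [clW_snd, Real.norm_eq_abs]
      refine le_max_of_le_right ?_
      calc |u (cl qlo qhi z.1) (cl plo phi z.2) (cl a b t) * Real.sin (cl qlo qhi z.1)
            - Real.cos (cl qlo qhi z.1)|
          ≤ |u (cl qlo qhi z.1) (cl plo phi z.2) (cl a b t)| * |Real.sin (cl qlo qhi z.1)|
            + |Real.cos (cl qlo qhi z.1)| := by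
            have := abs_sub (u (cl qlo qhi z.1) (cl plo phi z.2) (cl a b t)
              * Real.sin (cl qlo qhi z.1)) (Real.cos (cl qlo qhi z.1))
            rw [abs_mul] at this
            exact this
        _ ≤ M * 1 + 1 := by
            have h1 := hMbd t z
            have h2 := Real.abs_sin_le_one (cl qlo qhi z.1)
            have h3 := Real.abs_cos_le_one (cl qlo qhi z.1)
            nlinarith [abs_nonneg (u (cl qlo qhi z.1) (cl plo phi z.2) (cl a b t))]
        _ = M + 1 := by ring


/-- Global existence for a bounded Lipschitz field, starting at the left endpoint. -/
lemma exists_sol_of_field {W : ℝ → ℝ × ℝ → ℝ × ℝ} {K : NNReal} {C : ℝ} (hC : 1 ≤ C)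
    (hlip : ∀ t, LipschitzWith K (W t)) (hcont : ∀ z, Continuous fun t => W t z)
    (hbd : ∀ t z, ‖W t z‖ ≤ C) {a b : ℝ} (hab : a ≤ b) (z₀ : ℝ × ℝ) :
    ∃ f : ℝ → ℝ × ℝ, f a = z₀ ∧
      ∀ t ∈ Icc a b, HasDerivWithinAt f (W t (f t)) (Icc a b) t := by
  have hR : (0 : ℝ) ≤ C * (b - a) := mul_nonneg (by linarith) (by linarith)
  have hpl : IsPicardLindelof W (tmin := a) (tmax := b) ⟨a, le_rfl, hab⟩ z₀
      (C * (b - a)).toNNReal 0 C.toNNReal K :=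
    { lipschitzOnWith := fun t _ => (hlip t).lipschitzOnWith
      continuousOn := fun x _ => (hcont x).continuousOn
      norm_le := fun t _ x _ => (hbd t x).trans (Real.le_coe_toNNReal C)
      mul_max_le := by
        have e1 := Real.coe_toNNReal C (by linarith)
        have e2 := Real.coe_toNNReal _ hR
        simp only [e1, e2, NNReal.coe_zero, sub_zero, sub_self, tsub_zero]
        rw [max_eq_left (by linarith : (0:ℝ) ≤ b - a)] }
  obtain ⟨f, h1, h2⟩ := hpl.exists_eq_forall_mem_Icc_hasDerivWithinAt₀
  exact ⟨f, h1, h2⟩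

/-- Grönwall estimate for two solutions of the same Lipschitz field. -/
lemma dist_sol_le {W : ℝ → ℝ × ℝ → ℝ × ℝ} {K : NNReal} (hlip : ∀ t, LipschitzWith K (W t))
    {a b : ℝ} {f g : ℝ → ℝ × ℝ}
    (hf : ∀ t ∈ Icc a b, HasDerivWithinAt f (W t (f t)) (Icc a b) t)
    (hg : ∀ t ∈ Icc a b, HasDerivWithinAt g (W t (g t)) (Icc a b) t) :
    ∀ t ∈ Icc a b, dist (f t) (g t) ≤ dist (f a) (g a) * Real.exp (K * (t - a)) :=
  dist_le_of_trajectories_ODE hlip (contOn_of_hdw hf)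
    (fun t ht => hdw_Ici ht (hf t (Ico_subset_Icc_self ht))) (contOn_of_hdw hg)
    (fun t ht => hdw_Ici ht (hg t (Ico_subset_Icc_self ht))) le_rfl

/-- Uniqueness of solutions of the pendulum ODE. -/
lemma sol_unique {u : ℝ → ℝ → ℝ → ℝ} (hu : Adm u) {a b : ℝ} (hab : a ≤ b)
    {f g : ℝ → ℝ × ℝ} (hf : IsSol u a b f) (hg : IsSol u a b g) (h0 : f a = g a) :
    EqOn f g (Icc a b) := by
  obtain ⟨Rf, hRf⟩ := (isCompact_Icc (a := a) (b := b)).exists_bound_of_continuousOn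
    hf.continuousOn
  obtain ⟨Rg, hRg⟩ := (isCompact_Icc (a := a) (b := b)).exists_bound_of_continuousOn
    hg.continuousOn
  set R := max (max Rf Rg) 0 with hR
  have hRnn : (0:ℝ) ≤ R := le_max_right _ _
  obtain ⟨K, C, hC, hlip, hcont, hbd⟩ :=
    clW_props hu (neg_le_self hRnn) (neg_le_self hRnn) hab (qlo := -R) (qhi := R)
      (plo := -R) (phi := R) (a := a) (b := b)
  have hmem : ∀ (h : ℝ → ℝ × ℝ), (∀ t ∈ Icc a b, ‖h t‖ ≤ R) → ∀ t ∈ Icc a b,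
      clW u (-R) R (-R) R a b t (h t) = vf u t (h t) := by
    intro h hb t ht
    have h1 : |(h t).1| ≤ R := le_trans (by simpa using norm_fst_le (h t)) (hb t ht)
    have h2 : |(h t).2| ≤ R := le_trans (by simpa using norm_snd_le (h t)) (hb t ht)
    exact clW_eq_vf ht (abs_le.mp h1) (abs_le.mp h2)
  have hfb : ∀ t ∈ Icc a b, ‖f t‖ ≤ R := fun t ht =>
    (hRf t ht).trans (le_max_of_le_left (le_max_left _ _))
  have hgb : ∀ t ∈ Icc a b, ‖g t‖ ≤ R := fun t ht =>
    (hRg t ht).trans (le_max_of_le_left (le_max_right _ _))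
  have hf' : ∀ t ∈ Icc a b, HasDerivWithinAt f (clW u (-R) R (-R) R a b t (f t)) (Icc a b) t :=
    fun t ht => (hmem f hfb t ht).symm ▸ hf t ht
  have hg' : ∀ t ∈ Icc a b, HasDerivWithinAt g (clW u (-R) R (-R) R a b t (g t)) (Icc a b) t :=
    fun t ht => (hmem g hgb t ht).symm ▸ hg t ht
  intro t ht
  have := dist_sol_le hlip hf' hg' t ht
  rw [h0, dist_self, zero_mul] at this
  exact dist_le_zero.mp this

/-- Continuous dependence: a tube of solutions around a given solution. -/
lemma tube {u : ℝ → ℝ → ℝ → ℝ} (hu : Adm u) {a b : ℝ} (hab : a ≤ b) {f : ℝ → ℝ × ℝ}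
    (hf : IsSol u a b f) {ε : ℝ} (hε : 0 < ε) :
    ∃ δ > 0, ∀ z₀ : ℝ × ℝ, dist z₀ (f a) ≤ δ →
      ∃ g, g a = z₀ ∧ IsSol u a b g ∧ ∀ t ∈ Icc a b, dist (g t) (f t) ≤ ε := by
  obtain ⟨Rf, hRf⟩ := (isCompact_Icc (a := a) (b := b)).exists_bound_of_continuousOn
    hf.continuousOn
  set R := max Rf 0 + ε with hR
  have hRnn : (0:ℝ) ≤ R := by positivity
  have hfb : ∀ t ∈ Icc a b, ‖f t‖ ≤ R := fun t ht =>
    (hRf t ht).trans (by rw [hR]; nlinarith [le_max_left Rf (0:ℝ)])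
  obtain ⟨K, C, hC, hlip, hcont, hbd⟩ :=
    clW_props hu (neg_le_self hRnn) (neg_le_self hRnn) hab (qlo := -R) (qhi := R)
      (plo := -R) (phi := R) (a := a) (b := b)
  have hmem : ∀ (h : ℝ → ℝ × ℝ) (t : ℝ), t ∈ Icc a b → ‖h t‖ ≤ R →
      clW u (-R) R (-R) R a b t (h t) = vf u t (h t) := by
    intro h t ht hb
    have h1 : |(h t).1| ≤ R := le_trans (by simpa using norm_fst_le (h t)) hb
    have h2 : |(h t).2| ≤ R := le_trans (by simpa using norm_snd_le (h t)) hb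
    exact clW_eq_vf ht (abs_le.mp h1) (abs_le.mp h2)
  have hf' : ∀ t ∈ Icc a b, HasDerivWithinAt f (clW u (-R) R (-R) R a b t (f t)) (Icc a b) t :=
    fun t ht => (hmem f t ht ((hRf t ht).trans (by rw [hR]; nlinarith [le_max_left Rf (0:ℝ)]))).symm ▸ hf t ht
  refine ⟨ε / Real.exp (K * (b - a)), by positivity, ?_⟩
  intro z₀ hz₀
  obtain ⟨g, hg0, hg⟩ := exists_sol_of_field hC hlip hcont hbd hab z₀ (a := a) (b := b)
  have hdist : ∀ t ∈ Icc a b, dist (g t) (f t) ≤ ε := by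
    intro t ht
    have h1 := dist_sol_le hlip hg hf' t ht
    rw [hg0] at h1
    refine h1.trans ?_
    have h2 : Real.exp ((K:ℝ) * (t - a)) ≤ Real.exp ((K:ℝ) * (b - a)) := by
      apply Real.exp_le_exp.mpr
      have : (0:ℝ) ≤ (K:ℝ) := K.2
      nlinarith [ht.2]
    calc dist z₀ (f a) * Real.exp ((K:ℝ) * (t - a))
        ≤ (ε / Real.exp ((K:ℝ) * (b - a))) * Real.exp ((K:ℝ) * (b - a)) := by
          have he1 : (0:ℝ) < Real.exp ((K:ℝ) * (t - a)) := Real.exp_pos _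
          have he2 : (0:ℝ) < Real.exp ((K:ℝ) * (b - a)) := Real.exp_pos _
          have hd : (0:ℝ) ≤ dist z₀ (f a) := dist_nonneg
          have hd2 : dist z₀ (f a) ≤ ε / Real.exp ((K:ℝ) * (b - a)) := hz₀
          nlinarith
      _ = ε := div_mul_cancel₀ _ (Real.exp_ne_zero _)
  have hgsol : IsSol u a b g := by
    intro t ht
    have hgt : ‖g t‖ ≤ R := by
      calc ‖g t‖ ≤ ‖f t‖ + dist (g t) (f t) := by
            rw [dist_eq_norm]
            have := norm_add_le (g t - f t) (f t)
            simpa [add_comm] using this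
        _ ≤ max Rf 0 + ε := add_le_add ((hRf t ht).trans (le_max_left _ _)) (hdist t ht)
    exact (hmem g t ht hgt) ▸ hg t ht
  exact ⟨g, hg0, hgsol, hdist⟩

/-- Gluing two solutions. -/
lemma glue_sol {u : ℝ → ℝ → ℝ → ℝ} {a b c : ℝ} (hab : a ≤ b) (hbc : b ≤ c)
    {f g : ℝ → ℝ × ℝ} (hf : IsSol u a b f) (hg : IsSol u b c g) (hfg : f b = g b) :
    ∃ h, IsSol u a c h ∧ (∀ t ∈ Icc a b, h t = f t) ∧ (∀ t ∈ Icc b c, h t = g t) := by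
  set h : ℝ → ℝ × ℝ := fun t => if t ≤ b then f t else g t with hh
  have hhf : ∀ t ∈ Icc a b, h t = f t := by
    intro t ht; simp only [hh, if_pos ht.2]
  have hhg : ∀ t ∈ Icc b c, h t = g t := by
    intro t ht
    rcases eq_or_lt_of_le ht.1 with h1 | h1
    · simp only [hh, ← h1, if_pos le_rfl]; exact hfg
    · simp only [hh, if_neg (not_le.mpr h1)]
  refine ⟨h, ?_, hhf, hhg⟩
  intro t ht
  rcases lt_trichotomy t b with htb | htb | htb
  · have hfd : HasDerivWithinAt h (vf u t (h t)) (Icc a b) t := by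
      refine (hf t ⟨ht.1, htb.le⟩).congr ?_ (hhf t ⟨ht.1, htb.le⟩) |>.congr_deriv ?_
      · intro s hs; exact hhf s hs
      · rw [hhf t ⟨ht.1, htb.le⟩]
    have h2 : HasDerivWithinAt h (vf u t (h t)) (Icc a c ∩ Iio b) t :=
      hfd.mono (fun s hs => ⟨hs.1.1, hs.2.le⟩)
    exact (hasDerivWithinAt_inter (Iio_mem_nhds htb)).mp h2
  · subst htb
    have h1 : HasDerivWithinAt h (vf u t (h t)) (Icc a t) t := by
      refine (hf t ⟨ht.1, le_rfl⟩).congr ?_ (hhf t ⟨ht.1, le_rfl⟩) |>.congr_deriv ?_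
      · intro s hs; exact hhf s hs
      · rw [hhf t ⟨ht.1, le_rfl⟩]
    have h2 : HasDerivWithinAt h (vf u t (h t)) (Icc t c) t := by
      have e1 : h t = g t := hhg t ⟨le_rfl, ht.2⟩
      refine (hg t ⟨le_rfl, ht.2⟩).congr ?_ e1 |>.congr_deriv ?_
      · intro s hs; exact hhg s hs
      · rw [e1]
    have := h1.union h2
    rwa [Icc_union_Icc_eq_Icc ht.1 ht.2] at this
  · have hgd : HasDerivWithinAt h (vf u t (h t)) (Icc b c) t := by
      refine (hg t ⟨htb.le, ht.2⟩).congr ?_ (hhg t ⟨htb.le, ht.2⟩) |>.congr_deriv ?_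
      · intro s hs; exact hhg s hs
      · rw [hhg t ⟨htb.le, ht.2⟩]
    have h2 : HasDerivWithinAt h (vf u t (h t)) (Icc a c ∩ Ioi b) t :=
      hgd.mono (fun s hs => ⟨hs.2.le, hs.1.2⟩)
    exact (hasDerivWithinAt_inter (Ioi_mem_nhds htb)).mp h2


/-- The set of initial positions (with zero momentum) from which some solution falls left. -/
def Lset (u : ℝ → ℝ → ℝ → ℝ) (t₀ : ℝ) : Set ℝ :=
  {x | ∃ T, t₀ ≤ T ∧ ∃ f, IsSol u t₀ T f ∧ f t₀ = (x, 0) ∧ (f T).1 ≤ 0 ∧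
    ∀ t ∈ Icc t₀ T, (f t).1 < π}

/-- The set of initial positions from which some solution falls right. -/
def Rset (u : ℝ → ℝ → ℝ → ℝ) (t₀ : ℝ) : Set ℝ :=
  {x | ∃ T, t₀ ≤ T ∧ ∃ f, IsSol u t₀ T f ∧ f t₀ = (x, 0) ∧ π ≤ (f T).1 ∧
    ∀ t ∈ Icc t₀ T, 0 < (f t).1}

/-- At the first exit through `q = 0`, the momentum is strictly negative. -/
lemma exit_neg_mom {u : ℝ → ℝ → ℝ → ℝ} {a T : ℝ} (haT : a < T) {f : ℝ → ℝ × ℝ}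
    (hf : IsSol u a T f) (hpos : ∀ s ∈ Ico a T, 0 < (f s).1) (hT : (f T).1 = 0) :
    (f T).2 < 0 := by
  have hTm : T ∈ Icc a T := ⟨haT.le, le_rfl⟩
  have hq : ∀ s ∈ Icc a T, HasDerivWithinAt (fun r => (f r).1) ((f s).2) (Icc a T) s :=
    fun s hs => hdw_fst (hf s hs)
  have hp : ∀ s ∈ Icc a T, HasDerivWithinAt (fun r => (f r).2)
      (u (f s).1 (f s).2 s * Real.sin (f s).1 - Real.cos (f s).1) (Icc a T) s :=
    fun s hs => hdw_snd (hf s hs)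
  have hne : (𝓝[Ico a T] T).NeBot := by
    rw [← mem_closure_iff_nhdsWithin_neBot, closure_Ico haT.ne, mem_Icc]
    exact ⟨haT.le, le_rfl⟩
  have hsub : Ico a T ⊆ Icc a T \ {T} :=
    fun s hs => ⟨⟨hs.1, hs.2.le⟩, fun h => absurd h (ne_of_lt hs.2)⟩
  -- step 1 : (f T).2 ≤ 0
  have hle : (f T).2 ≤ 0 := by
    have hs1 := hasDerivWithinAt_iff_tendsto_slope.mp (hq T hTm)
    have hs2 : Tendsto (slope (fun r => (f r).1) T) (𝓝[Ico a T] T) (𝓝 ((f T).2)) :=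
      hs1.mono_left (nhdsWithin_mono _ hsub)
    refine le_of_tendsto hs2 (eventually_nhdsWithin_of_forall (fun s hs => ?_))
    rw [slope_def_field, hT, sub_zero]
    exact div_nonpos_of_nonneg_of_nonpos (hpos s hs).le (by linarith [hs.2])
  rcases hle.lt_or_eq with h | h0
  · exact h
  exfalso
  -- step 2 : derive a contradiction from (f T).2 = 0
  have hderiv : HasDerivWithinAt (fun r => (f r).2) (-1 : ℝ) (Icc a T) T := by
    have := hp T hTm
    rw [hT, h0] at this
    simpa using this
  have hs1 := hasDerivWithinAt_iff_tendsto_slope.mp hderiv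
  have hs2 : Tendsto (slope (fun r => (f r).2) T) (𝓝[Ico a T] T) (𝓝 (-1 : ℝ)) :=
    hs1.mono_left (nhdsWithin_mono _ hsub)
  have hev : ∀ᶠ s in 𝓝[Ico a T] T, slope (fun r => (f r).2) T s < -(1/2) :=
    hs2.eventually_lt_const (by norm_num)
  rw [Filter.eventually_iff, Metric.mem_nhdsWithin_iff] at hev
  obtain ⟨ε, hε, hev⟩ := hev
  set s₁ := max a (T - ε / 2) with hs₁
  have hs₁T : s₁ < T := max_lt haT (by linarith)
  have has₁ : a ≤ s₁ := le_max_left _ _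
  have hps : ∀ s, s₁ < s → s < T → 0 < (f s).2 := by
    intro s hs1' hs2'
    have hsa : a ≤ s := has₁.trans hs1'.le
    have hdist : dist s T < ε := by
      rw [Real.dist_eq, abs_of_nonpos (by linarith)]
      have : T - ε / 2 ≤ s₁ := le_max_right _ _
      linarith
    have := hev ⟨Metric.mem_ball.mpr hdist, hsa, hs2'⟩
    simp only [mem_setOf_eq] at this
    rw [slope_def_field, h0, sub_zero] at this
    have hsT : s - T < 0 := by linarith
    have := (div_lt_iff_of_neg hsT).mp this
    linarith
  -- strict monotonicity of q on [s₁, T]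
  have hmono : StrictMonoOn (fun r => (f r).1) (Icc s₁ T) := by
    refine strictMonoOn_of_deriv_pos (convex_Icc s₁ T) ?_ ?_
    · exact fun s hs => ((hq s ⟨has₁.trans hs.1, hs.2⟩).mono
        (Icc_subset_Icc has₁ le_rfl)).continuousWithinAt
    · intro s hs
      rw [interior_Icc] at hs
      have hda : HasDerivAt (fun r => (f r).1) ((f s).2) s :=
        (hq s ⟨has₁.trans hs.1.le, hs.2.le⟩).hasDerivAt
          (Icc_mem_nhds (lt_of_le_of_lt has₁ hs.1) hs.2)
      rw [hda.deriv]
      exact hps s hs.1 hs.2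
  have h1 : (f s₁).1 < (f T).1 :=
    hmono ⟨le_rfl, hs₁T.le⟩ ⟨hs₁T.le, le_rfl⟩ hs₁T
  rw [hT] at h1
  exact absurd (hpos s₁ ⟨has₁, hs₁T⟩) (not_lt.mpr h1.le)

/-- Near `q = 0` every solution falls: the barrier lemma. -/
lemma Lset_near_zero {u : ℝ → ℝ → ℝ → ℝ} (hu : Adm u) (t₀ : ℝ) :
    ∃ δ > 0, ∀ x, 0 < x → x < δ → x ∈ Lset u t₀ := by
  have hDc : IsCompact (Icc (-1:ℝ) 1 ×ˢ Icc (-1:ℝ) 1 ×ˢ Icc t₀ (t₀+1)) :=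
    isCompact_Icc.prod (isCompact_Icc.prod isCompact_Icc)
  obtain ⟨M0, hM0⟩ := hDc.exists_bound_of_continuousOn hu.1.continuousOn
  set M := max M0 0 with hM
  have hMnn : (0:ℝ) ≤ M := le_max_right _ _
  set δ₁ : ℝ := min ((4*(M+1))⁻¹) (1/2) with hδ₁
  have hδ₁pos : 0 < δ₁ := lt_min (by positivity) (by norm_num)
  have hδ₁le : δ₁ ≤ 1/2 := min_le_right _ _
  have hMδ : M * δ₁ ≤ 1/4 := by
    have h1 : δ₁ ≤ (4*(M+1))⁻¹ := min_le_left _ _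
    have h2 : (0:ℝ) < 4*(M+1) := by positivity
    have h3 : M * δ₁ ≤ M * (4*(M+1))⁻¹ := mul_le_mul_of_nonneg_left h1 hMnn
    have h4 : M * (4*(M+1))⁻¹ = M / (4*(M+1)) := by rw [div_eq_mul_inv]
    have h5 : M / (4*(M+1)) ≤ 1/4 := by
      rw [div_le_iff₀ h2]; linarith
    linarith
  set τ : ℝ := δ₁ / 2 with hτ
  have hτpos : 0 < τ := by positivity
  have hτle : τ ≤ 1 := by rw [hτ]; linarith
  set t₁ : ℝ := t₀ + τ with ht₁
  have ht₀₁ : t₀ ≤ t₁ := by rw [ht₁]; linarith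
  obtain ⟨K, C, hC, hlip, hcont, hbd⟩ := clW_props hu
    (neg_le_self hδ₁pos.le) (neg_le_self hδ₁pos.le) ht₀₁
    (qlo := -δ₁) (qhi := δ₁) (plo := -δ₁) (phi := δ₁) (a := t₀) (b := t₁)
  set W := clW u (-δ₁) δ₁ (-δ₁) δ₁ t₀ t₁ with hW
  -- uniform bounds on the second component of W
  have hqhat : ∀ z : ℝ, |cl (-δ₁) δ₁ z| ≤ δ₁ := by
    intro z
    have := cl_mem (neg_le_self hδ₁pos.le) z
    exact abs_le.mpr ⟨this.1, this.2⟩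
  have hubd : ∀ (t : ℝ) (z : ℝ × ℝ),
      |u (cl (-δ₁) δ₁ z.1) (cl (-δ₁) δ₁ z.2) (cl t₀ t₁ t)| ≤ M := by
    intro t z
    have h1 := cl_mem (neg_le_self hδ₁pos.le) z.1
    have h2 := cl_mem (neg_le_self hδ₁pos.le) z.2
    have h3 := cl_mem ht₀₁ t
    have hmem : ((cl (-δ₁) δ₁ z.1, cl (-δ₁) δ₁ z.2, cl t₀ t₁ t) : ℝ × ℝ × ℝ) ∈
        Icc (-1:ℝ) 1 ×ˢ Icc (-1:ℝ) 1 ×ˢ Icc t₀ (t₀+1) := by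
      refine ⟨⟨by linarith [h1.1], by linarith [h1.2]⟩,
        ⟨by linarith [h2.1], by linarith [h2.2]⟩, ⟨h3.1, by linarith [h3.2]⟩⟩
    have := hM0 _ hmem
    simp only [Real.norm_eq_abs] at this
    exact this.trans (le_max_left _ _)
  have hA : ∀ (t : ℝ) (z : ℝ × ℝ), (W t z).2 ≤ -(1/2) := by
    intro t z
    rw [hW, clW_snd]
    have h1 := hubd t z
    have h2 : |Real.sin (cl (-δ₁) δ₁ z.1)| ≤ δ₁ :=
      le_trans Real.abs_sin_le_abs (hqhat z.1)
    have h3 : 1 - δ₁^2/2 ≤ Real.cos (cl (-δ₁) δ₁ z.1) := by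
      refine le_trans ?_ Real.one_sub_sq_div_two_le_cos
      have := hqhat z.1
      nlinarith [abs_nonneg (cl (-δ₁) δ₁ z.1), sq_abs (cl (-δ₁) δ₁ z.1)]
    have h4 : |u (cl (-δ₁) δ₁ z.1) (cl (-δ₁) δ₁ z.2) (cl t₀ t₁ t) *
        Real.sin (cl (-δ₁) δ₁ z.1)| ≤ 1/4 := by
      rw [abs_mul]
      nlinarith [abs_nonneg (u (cl (-δ₁) δ₁ z.1) (cl (-δ₁) δ₁ z.2) (cl t₀ t₁ t)),
        abs_nonneg (Real.sin (cl (-δ₁) δ₁ z.1))]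
    have h5 := abs_le.mp h4
    have h6 : δ₁^2 ≤ 1/4 := by nlinarith
    linarith [h5.2]
  have hB : ∀ (t : ℝ) (z : ℝ × ℝ), -2 ≤ (W t z).2 := by
    intro t z
    rw [hW, clW_snd]
    have h2 : |Real.sin (cl (-δ₁) δ₁ z.1)| ≤ δ₁ :=
      le_trans Real.abs_sin_le_abs (hqhat z.1)
    have h4 : |u (cl (-δ₁) δ₁ z.1) (cl (-δ₁) δ₁ z.2) (cl t₀ t₁ t) *
        Real.sin (cl (-δ₁) δ₁ z.1)| ≤ 1/4 := by
      rw [abs_mul]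
      have h1 := hubd t z
      nlinarith [abs_nonneg (u (cl (-δ₁) δ₁ z.1) (cl (-δ₁) δ₁ z.2) (cl t₀ t₁ t)),
        abs_nonneg (Real.sin (cl (-δ₁) δ₁ z.1))]
    have h5 := abs_le.mp h4
    have h7 := Real.cos_le_one (cl (-δ₁) δ₁ z.1)
    linarith [h5.1]
  refine ⟨min (τ^2/4) δ₁, by positivity, ?_⟩
  intro x hx0 hxδ
  have hxδ₁ : x < δ₁ := lt_of_lt_of_le hxδ (min_le_right _ _)
  have hxτ : x < τ^2/4 := lt_of_lt_of_le hxδ (min_le_left _ _)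
  obtain ⟨f, hf0, hf⟩ := exists_sol_of_field hC hlip hcont hbd ht₀₁ ((x, 0) : ℝ × ℝ)
  have hp : ∀ t ∈ Icc t₀ t₁, HasDerivWithinAt (fun r => (f r).2) ((W t (f t)).2)
      (Icc t₀ t₁) t := fun t ht => hdw_snd (hf t ht)
  have hq' : ∀ t ∈ Icc t₀ t₁, HasDerivWithinAt (fun r => (f r).1) ((W t (f t)).1)
      (Icc t₀ t₁) t := fun t ht => hdw_fst (hf t ht)
  -- momentum bounds
  have hpneg : ∀ t ∈ Icc t₀ t₁, (f t).2 ≤ -((t - t₀)/2) := by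
    have hanti : AntitoneOn (fun t => (f t).2 + (t - t₀)/2) (Icc t₀ t₁) := by
      refine anti_help (ψ := fun t => (W t (f t)).2 + 1/2) (fun t ht => ?_) (fun t ht => ?_)
      · exact (hp t ht).add ((((hasDerivWithinAt_id t _).sub_const t₀).div_const 2))
      · show (W t (f t)).2 + 1/2 ≤ 0
        linarith [hA t (f t)]
    intro t ht
    have h9 := hanti ⟨le_rfl, ht₀₁⟩ ht ht.1
    simp only [hf0, sub_self, zero_div, add_zero] at h9
    linarith [h9]
  have hpge : ∀ t ∈ Icc t₀ t₁, -δ₁ ≤ (f t).2 := by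
    have hmono : MonotoneOn (fun t => (f t).2 + 2*(t - t₀)) (Icc t₀ t₁) := by
      refine mono_help (ψ := fun t => (W t (f t)).2 + 2) (fun t ht => ?_) (fun t ht => ?_)
      · have h2 : HasDerivWithinAt (fun t : ℝ => 2*(t - t₀)) 2 (Icc t₀ t₁) t := by
          simpa using (((hasDerivWithinAt_id t (Icc t₀ t₁)).sub_const t₀).const_mul 2)
        exact (hp t ht).add h2
      · show (0:ℝ) ≤ (W t (f t)).2 + 2
        linarith [hB t (f t)]
    intro t ht
    have h9 := hmono ⟨le_rfl, ht₀₁⟩ ht ht.1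
    simp only [hf0, sub_self, mul_zero, add_zero] at h9
    have h3 : t - t₀ ≤ δ₁ / 2 := by
      have h8 := ht.2; rw [ht₁, hτ] at h8; linarith
    linarith [h9]
  -- the clamp is inactive on the momentum
  have hWfst : ∀ t ∈ Icc t₀ t₁, (W t (f t)).1 = (f t).2 := by
    intro t ht
    rw [hW, clW_fst]
    refine cl_eq_self (hpge t ht) ?_
    have := hpneg t ht
    have h1 : (f t).2 ≤ 0 := by linarith [ht.1]
    linarith
  have hq : ∀ t ∈ Icc t₀ t₁, HasDerivWithinAt (fun r => (f r).1) ((f t).2)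
      (Icc t₀ t₁) t := fun t ht => (hWfst t ht) ▸ hq' t ht
  have hqanti : AntitoneOn (fun t => (f t).1) (Icc t₀ t₁) := by
    refine anti_help hq (fun t ht => ?_)
    have h9 := hpneg t (Ioo_subset_Icc_self ht)
    have h8 : t₀ ≤ t := ht.1.le
    linarith
  have hqbound : (f t₁).1 ≤ x - τ^2/4 := by
    have hanti : AntitoneOn (fun t => (f t).1 + (t - t₀)^2/4) (Icc t₀ t₁) := by
      refine anti_help (ψ := fun t => (f t).2 + (t - t₀)/2) (fun t ht => ?_) (fun t ht => ?_)
      · have h2 : HasDerivWithinAt (fun t : ℝ => (t - t₀)^2/4) ((t - t₀)/2) (Icc t₀ t₁) t := by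
          have h3 : HasDerivWithinAt (fun t : ℝ => (t - t₀)^2) (2*(t - t₀)) (Icc t₀ t₁) t := by
            have := (((hasDerivWithinAt_id t (Icc t₀ t₁)).sub_const t₀).pow 2)
            exact this.congr_deriv (by simp)
          exact (h3.div_const 4).congr_deriv (by ring)
        exact (hq t ht).add h2
      · show (f t).2 + (t - t₀)/2 ≤ 0
        linarith [hpneg t (Ioo_subset_Icc_self ht)]
    have h1 := hanti ⟨le_rfl, ht₀₁⟩ ⟨ht₀₁, le_rfl⟩ ht₀₁
    simp only [hf0, sub_self] at h1
    have h2 : t₁ - t₀ = τ := by rw [ht₁]; ring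
    rw [h2] at h1
    norm_num at h1
    linarith
  have hq1 : (f t₁).1 ≤ 0 := by linarith
  have hcont_q : ContinuousOn (fun t => (f t).1) (Icc t₀ t₁) :=
    fun t ht => (hq t ht).continuousWithinAt
  have hq0 : 0 < (f t₀).1 := by rw [hf0]; exact hx0
  obtain ⟨T, hT1, hT2, hT0, hTpos⟩ := exit_zero ht₀₁ hcont_q hq0 hq1
  -- on [t₀, T] the clamped field agrees with the true field
  have hbox : ∀ t ∈ Icc t₀ T, W t (f t) = vf u t (f t) := by
    intro t ht
    have htt : t ∈ Icc t₀ t₁ := ⟨ht.1, ht.2.trans hT2⟩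
    refine clW_eq_vf ⟨ht.1, ht.2.trans hT2⟩ ⟨?_, ?_⟩ ⟨hpge t htt, ?_⟩
    · -- 0 ≤ q t (up to -δ₁)
      rcases eq_or_lt_of_le ht.2 with h | h
      · rw [h, hT0]; linarith
      · linarith [hTpos t ht.1 h]
    · -- q t ≤ δ₁
      have h9 := hqanti ⟨le_rfl, ht₀₁⟩ htt ht.1
      simp only [hf0] at h9
      linarith
    · have := hpneg t htt
      linarith [ht.1, hδ₁pos]
  refine ⟨T, hT1.le, f, ?_, hf0, ?_, ?_⟩
  · intro t ht
    have := (hf t ⟨ht.1, ht.2.trans hT2⟩).mono (Icc_subset_Icc le_rfl hT2)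
    rwa [hbox t ht] at this
  · rw [hT0]
  · intro t ht
    have htt : t ∈ Icc t₀ t₁ := ⟨ht.1, ht.2.trans hT2⟩
    have h9 := hqanti ⟨le_rfl, ht₀₁⟩ htt ht.1
    simp only [hf0] at h9
    have hπ : (1:ℝ)/2 < π := by linarith [Real.pi_gt_three]
    calc (f t).1 ≤ x := h9
      _ < π := by linarith


lemma fst_dist_le (a b : ℝ × ℝ) : |a.1 - b.1| ≤ dist a b := by
  rw [Prod.dist_eq, ← Real.dist_eq]
  exact le_max_left _ _

/-- Openness of the set of initial conditions falling left. -/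
lemma Lset_nbhd {u : ℝ → ℝ → ℝ → ℝ} (hu : Adm u) {t₀ x : ℝ} (hx : 0 < x)
    (hxL : x ∈ Lset u t₀) : ∃ ε > 0, ∀ y : ℝ, |y - x| < ε → y ∈ Lset u t₀ := by
  obtain ⟨T, hT, f, hf, hf0, hfT, hfπ⟩ := hxL
  have hq0 : 0 < (f t₀).1 := by rw [hf0]; exact hx
  -- first exit time τ
  obtain ⟨τ, hτ1, hτ2, hτ0, hτpos⟩ := exit_zero hT
    (fun t ht => (hdw_fst (hf t ht)).continuousWithinAt) hq0 hfT
  have hfτ : IsSol u t₀ τ f := hf.mono (Icc_subset_Icc le_rfl hτ2)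
  have hpτ : (f τ).2 < 0 := exit_neg_mom hτ1 hfτ (fun s hs => hτpos s hs.1 hs.2) hτ0
  set pτ := (f τ).2 with hpτdef
  -- extension solution g on [τ, τ']
  obtain ⟨K2, C2, hC2, hlip2, hcont2, hbd2⟩ := clW_props hu
    (show (-1:ℝ) ≤ 1 by norm_num) (show pτ - 1 ≤ pτ + 1 by linarith)
    (show τ ≤ τ + 1 by linarith)
    (qlo := -1) (qhi := 1) (plo := pτ - 1) (phi := pτ + 1) (a := τ) (b := τ + 1)
  set W2 := clW u (-1) 1 (pτ-1) (pτ+1) τ (τ+1) with hW2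
  set r : ℝ := min 1 (-pτ/2) with hr
  have hrpos : 0 < r := lt_min one_pos (by linarith)
  have hr1 : r ≤ 1 := min_le_left _ _
  have hr2 : r ≤ -pτ/2 := min_le_right _ _
  have hC2pos : (0:ℝ) < C2 := lt_of_lt_of_le one_pos hC2
  set ε₁ : ℝ := min 1 (r / C2) with hε₁
  have hε₁pos : 0 < ε₁ := lt_min one_pos (by positivity)
  have hε₁1 : ε₁ ≤ 1 := min_le_left _ _
  have hCε : C2 * ε₁ ≤ r := by
    have h1 : ε₁ ≤ r / C2 := min_le_right _ _
    calc C2 * ε₁ ≤ C2 * (r / C2) := mul_le_mul_of_nonneg_left h1 hC2pos.le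
      _ = r := by field_simp
  set τ' : ℝ := τ + ε₁ with hτ'
  have hττ' : τ ≤ τ' := by rw [hτ']; linarith
  obtain ⟨g, hg0, hg⟩ := exists_sol_of_field hC2 hlip2 hcont2 hbd2 hττ' ((0, pτ) : ℝ × ℝ)
  -- g stays near (0, pτ)
  have hgr : ∀ t ∈ Icc τ τ', ‖g t - ((0, pτ) : ℝ × ℝ)‖ ≤ r := by
    intro t ht
    have h1 := norm_image_sub_le_of_norm_deriv_le_segment' hg
      (fun s hs => hbd2 s (g s)) t ht
    rw [hg0] at h1
    refine h1.trans ?_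
    have h2 : t - τ ≤ ε₁ := by linarith [ht.2]
    calc C2 * (t - τ) ≤ C2 * ε₁ := mul_le_mul_of_nonneg_left h2 hC2pos.le
      _ ≤ r := hCε
  have hgq : ∀ t ∈ Icc τ τ', |(g t).1| ≤ r := by
    intro t ht
    have := (fst_dist_le (g t) ((0, pτ) : ℝ × ℝ))
    rw [dist_eq_norm] at this
    simpa using this.trans (hgr t ht)
  have hgp : ∀ t ∈ Icc τ τ', |(g t).2 - pτ| ≤ r := by
    intro t ht
    have h1 : ‖(g t - ((0, pτ) : ℝ × ℝ)).2‖ ≤ ‖g t - ((0, pτ) : ℝ × ℝ)‖ :=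
      norm_snd_le _
    simp only [Prod.snd_sub, Real.norm_eq_abs] at h1
    exact h1.trans (hgr t ht)
  -- g is a genuine solution
  have hgsol : IsSol u τ τ' g := by
    intro t ht
    have hq1 := abs_le.mp ((hgq t ht).trans hr1)
    have hp1 := abs_le.mp ((hgp t ht).trans hr1)
    have heq : W2 t (g t) = vf u t (g t) :=
      clW_eq_vf ⟨ht.1, by linarith [ht.2, hε₁1]⟩ ⟨hq1.1, hq1.2⟩
        ⟨by linarith [hp1.1], by linarith [hp1.2]⟩
    exact heq ▸ hg t ht
  -- the first component of g decreases fast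
  have hq_g : ∀ t ∈ Icc τ τ', HasDerivWithinAt (fun s => (g s).1) ((g t).2)
      (Icc τ τ') t := fun t ht => hdw_fst (hgsol t ht)
  have hganti : AntitoneOn (fun t => (g t).1 - pτ/2 * (t - τ)) (Icc τ τ') := by
    refine anti_help (ψ := fun t => (g t).2 - pτ/2) (fun t ht => ?_) (fun t ht => ?_)
    · exact (hq_g t ht).sub (((hasDerivWithinAt_id t _).sub_const τ).const_mul (pτ/2)
        |>.congr_deriv (by ring))
    · show (g t).2 - pτ/2 ≤ 0
      have := (abs_le.mp (hgp t (Ioo_subset_Icc_self ht))).2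
      linarith
  have hgq' : (g τ').1 < 0 := by
    have h1 := hganti ⟨le_rfl, hττ'⟩ ⟨hττ', le_rfl⟩ hττ'
    simp only [hg0, sub_self, mul_zero, sub_zero] at h1
    have h2 : τ' - τ = ε₁ := by rw [hτ']; ring
    rw [h2] at h1
    nlinarith
  -- glue f and g
  have hfg : f τ = ((0, pτ) : ℝ × ℝ) := by
    rw [Prod.ext_iff]; exact ⟨hτ0, rfl⟩
  obtain ⟨h, hhsol, hhf, hhg⟩ := glue_sol hτ1.le hττ' hfτ hgsol (by rw [hfg, hg0])
  -- pointwise bound below π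
  have hπ3 : (1:ℝ) < π := by linarith [Real.pi_gt_three]
  have hhπ : ∀ t ∈ Icc t₀ τ', (h t).1 < π := by
    intro t ht
    rcases le_total t τ with h1 | h1
    · rw [hhf t ⟨ht.1, h1⟩]; exact hfπ t ⟨ht.1, h1.trans hτ2⟩
    · rw [hhg t ⟨h1, ht.2⟩]
      have := (abs_le.mp ((hgq t ⟨h1, ht.2⟩).trans hr1)).2
      linarith
  -- maximum of the first component
  have hht : t₀ ≤ τ' := hτ1.le.trans hττ'
  obtain ⟨tm, htm, hmax⟩ := (isCompact_Icc (a := t₀) (b := τ')).exists_isMaxOn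
    (nonempty_Icc.mpr hht)
    (fun t ht => (hdw_fst (hhsol t ht)).continuousWithinAt)
  set m : ℝ := (h tm).1 with hmdef
  have hmπ : m < π := hhπ tm htm
  set c : ℝ := -(g τ').1 with hcdef
  have hcpos : 0 < c := by rw [hcdef]; linarith
  set ε₂ : ℝ := min c (π - m) with hε₂
  have hε₂pos : 0 < ε₂ := lt_min hcpos (by linarith)
  obtain ⟨δ, hδpos, htube⟩ := tube hu hht hhsol (ε := ε₂/2) (by positivity)
  refine ⟨δ, hδpos, ?_⟩
  intro y hy
  have hht₀ : h t₀ = ((x, 0) : ℝ × ℝ) := by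
    rw [hhf t₀ ⟨le_rfl, hτ1.le⟩, hf0]
  have hyz : dist ((y, 0) : ℝ × ℝ) (h t₀) ≤ δ := by
    rw [hht₀, Prod.dist_eq]
    simp only [Real.dist_eq, sub_self, abs_zero, dist_self]
    calc max |y - x| 0 = |y - x| := max_eq_left (abs_nonneg _)
      _ ≤ δ := hy.le
  obtain ⟨g2, hg20, hg2sol, hg2dist⟩ := htube ((y, 0) : ℝ × ℝ) hyz
  refine ⟨τ', hht, g2, hg2sol, hg20, ?_, ?_⟩
  · -- (g2 τ').1 ≤ 0
    have hd := hg2dist τ' ⟨hht, le_rfl⟩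
    have h1 : |(g2 τ').1 - (h τ').1| ≤ ε₂/2 := (fst_dist_le _ _).trans hd
    have h2 : (h τ').1 = (g τ').1 := by rw [hhg τ' ⟨hττ', le_rfl⟩]
    have h3 := (abs_le.mp h1).2
    have h4 : ε₂ ≤ c := min_le_left _ _
    rw [h2] at h3
    have h5 : (g τ').1 = -c := by rw [hcdef]; ring
    rw [h5] at h3
    linarith
  · intro t ht
    have hd := hg2dist t ht
    have h1 : |(g2 t).1 - (h t).1| ≤ ε₂/2 := (fst_dist_le _ _).trans hd
    have h2 : (h t).1 ≤ m := hmax ht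
    have h3 := (abs_le.mp h1).2
    have h4 : ε₂ ≤ π - m := min_le_right _ _
    linarith


/-- The reflected control. -/
noncomputable def flip (u : ℝ → ℝ → ℝ → ℝ) : ℝ → ℝ → ℝ → ℝ := fun q p t => -u (π - q) (-p) t

lemma flip_flip (u : ℝ → ℝ → ℝ → ℝ) : flip (flip u) = u := by
  funext q p t
  simp [flip]

lemma adm_flip {u : ℝ → ℝ → ℝ → ℝ} (hu : Adm u) : Adm (flip u) := by
  constructor
  · have hφ : Continuous fun x : ℝ × ℝ × ℝ => ((π - x.1, -x.2.1, x.2.2) : ℝ × ℝ × ℝ) :=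
      (continuous_const.sub continuous_fst).prodMk
        ((continuous_fst.comp continuous_snd).neg.prodMk
          (continuous_snd.comp continuous_snd))
    have := (hu.1.comp hφ).neg
    exact this
  · intro K hK
    set φ : ℝ × ℝ × ℝ → ℝ × ℝ × ℝ := fun x => (π - x.1, -x.2.1, x.2.2) with hφdef
    have hφ : Continuous φ :=
      (continuous_const.sub continuous_fst).prodMk
        ((continuous_fst.comp continuous_snd).neg.prodMk
          (continuous_snd.comp continuous_snd))
    obtain ⟨L, hL⟩ := hu.2 (φ '' K) (hK.image hφ)
    refine ⟨L, fun a ha b hb hab => ?_⟩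
    have h1 := hL (φ a) (mem_image_of_mem φ ha) (φ b) (mem_image_of_mem φ hb) hab
    have h2 : dist ((π - a.1, -a.2.1) : ℝ × ℝ) ((π - b.1, -b.2.1) : ℝ × ℝ) =
        dist ((a.1, a.2.1) : ℝ × ℝ) ((b.1, b.2.1) : ℝ × ℝ) := by
      rw [Prod.dist_eq, Prod.dist_eq, Real.dist_eq, Real.dist_eq, Real.dist_eq,
        Real.dist_eq]
      congr 1
      · rw [show π - a.1 - (π - b.1) = -(a.1 - b.1) by ring, abs_neg]
      · rw [show -a.2.1 - -b.2.1 = -(a.2.1 - b.2.1) by ring, abs_neg]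
    simp only [hφdef, flip] at h1 ⊢
    calc |-u (π - a.1) (-a.2.1) a.2.2 - -u (π - b.1) (-b.2.1) b.2.2|
        = |u (π - a.1) (-a.2.1) a.2.2 - u (π - b.1) (-b.2.1) b.2.2| := by
          rw [show -u (π - a.1) (-a.2.1) a.2.2 - -u (π - b.1) (-b.2.1) b.2.2
            = -(u (π - a.1) (-a.2.1) a.2.2 - u (π - b.1) (-b.2.1) b.2.2) by ring, abs_neg]
      _ ≤ L * dist ((π - a.1, -a.2.1) : ℝ × ℝ) ((π - b.1, -b.2.1) : ℝ × ℝ) := h1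
      _ = L * dist ((a.1, a.2.1) : ℝ × ℝ) ((b.1, b.2.1) : ℝ × ℝ) := by rw [h2]

lemma isSol_flip {u : ℝ → ℝ → ℝ → ℝ} {a b : ℝ} {f : ℝ → ℝ × ℝ} (h : IsSol u a b f) :
    IsSol (flip u) a b (fun t => (π - (f t).1, -(f t).2)) := by
  intro t ht
  have h1 := hdw_fst (h t ht)
  have h2 := hdw_snd (h t ht)
  have h3 : HasDerivWithinAt (fun s => π - (f s).1) (-(f t).2) (Icc a b) t := by
    simpa [vf] using h1.const_sub π
  have h4 : HasDerivWithinAt (fun s => -(f s).2)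
      (-(u (f t).1 (f t).2 t * Real.sin (f t).1 - Real.cos (f t).1)) (Icc a b) t := h2.neg
  have h5 := h3.prodMk h4
  have h6 : vf (flip u) t ((π - (f t).1, -(f t).2) : ℝ × ℝ) =
      ((-(f t).2, -(u (f t).1 (f t).2 t * Real.sin (f t).1 - Real.cos (f t).1)) : ℝ × ℝ) := by
    rw [vf]
    simp only [flip]
    rw [Prod.ext_iff]
    constructor
    · rfl
    · show -u (π - (π - (f t).1)) (- -(f t).2) t * Real.sin (π - (f t).1)
        - Real.cos (π - (f t).1) = _
      rw [Real.sin_pi_sub, Real.cos_pi_sub]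
      simp only [sub_sub_cancel, neg_neg]
      ring
  rw [h6]
  exact h5

lemma mem_Rset_iff {u : ℝ → ℝ → ℝ → ℝ} {t₀ x : ℝ} :
    x ∈ Rset u t₀ ↔ (π - x) ∈ Lset (flip u) t₀ := by
  constructor
  · rintro ⟨T, hT, f, hsol, h0, hTval, hpos⟩
    refine ⟨T, hT, fun t => (π - (f t).1, -(f t).2), isSol_flip hsol, ?_, ?_, ?_⟩
    · show (π - (f t₀).1, -(f t₀).2) = ((π - x : ℝ), (0:ℝ))
      rw [h0]; simp
    · show π - (f T).1 ≤ 0; linarith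
    · intro t ht
      show π - (f t).1 < π
      linarith [hpos t ht]
  · rintro ⟨T, hT, g, hsol, h0, hTval, hlt⟩
    have hsol2 := isSol_flip hsol
    rw [flip_flip] at hsol2
    refine ⟨T, hT, fun t => (π - (g t).1, -(g t).2), hsol2, ?_, ?_, ?_⟩
    · show (π - (g t₀).1, -(g t₀).2) = ((x : ℝ), (0:ℝ))
      rw [h0]; simp
    · show π ≤ π - (g T).1; linarith
    · intro t ht
      show 0 < π - (g t).1
      linarith [hlt t ht]

lemma Rset_nbhd {u : ℝ → ℝ → ℝ → ℝ} (hu : Adm u) {t₀ x : ℝ} (hxπ : x < π)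
    (hxR : x ∈ Rset u t₀) : ∃ ε > 0, ∀ y : ℝ, |y - x| < ε → y ∈ Rset u t₀ := by
  obtain ⟨ε, hε, h⟩ := Lset_nbhd (adm_flip hu) (by linarith : 0 < π - x)
    (mem_Rset_iff.mp hxR)
  refine ⟨ε, hε, fun y hy => ?_⟩
  rw [mem_Rset_iff]
  refine h (π - y) ?_
  rw [show π - y - (π - x) = -(y - x) by ring, abs_neg]
  exact hy

lemma Rset_near_pi {u : ℝ → ℝ → ℝ → ℝ} (hu : Adm u) (t₀ : ℝ) :
    ∃ δ > 0, ∀ x, π - δ < x → x < π → x ∈ Rset u t₀ := by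
  obtain ⟨δ, hδ, h⟩ := Lset_near_zero (adm_flip hu) t₀
  refine ⟨δ, hδ, fun x h1 h2 => ?_⟩
  rw [mem_Rset_iff]
  exact h (π - x) (by linarith) (by linarith)

lemma LR_disjoint {u : ℝ → ℝ → ℝ → ℝ} (hu : Adm u) {t₀ x : ℝ} (hx0 : 0 < x)
    (hxπ : x < π) : ¬(x ∈ Lset u t₀ ∧ x ∈ Rset u t₀) := by
  rintro ⟨⟨T1, hT1, f, hfsol, hf0, hfT, hfπ⟩, ⟨T2, hT2, g, hgsol, hg0, hgT, hgpos⟩⟩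
  rcases le_total T1 T2 with h | h
  · have heq : EqOn f g (Icc t₀ T1) :=
      sol_unique hu hT1 hfsol (hgsol.mono (Icc_subset_Icc le_rfl h))
        (by rw [hf0, hg0])
    have h1 := heq ⟨hT1, le_rfl⟩
    have h2 := hgpos T1 ⟨hT1, h⟩
    rw [← h1] at h2
    linarith
  · have heq : EqOn f g (Icc t₀ T2) :=
      sol_unique hu hT2 (hfsol.mono (Icc_subset_Icc le_rfl h)) hgsol
        (by rw [hf0, hg0])
    have h1 := heq ⟨hT2, le_rfl⟩
    have h2 := hfπ T2 ⟨hT2, h⟩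
    rw [h1] at h2
    linarith

/-- There is an initial condition on the zero-momentum segment avoiding both exit sets. -/
lemma exists_good_point {u : ℝ → ℝ → ℝ → ℝ} (hu : Adm u) (t₀ : ℝ) :
    ∃ x, 0 < x ∧ x < π ∧ x ∉ Lset u t₀ ∧ x ∉ Rset u t₀ := by
  by_contra hcon
  push_neg at hcon
  -- every point of (0,π) is in Lset ∪ Rset
  have hcover : ∀ x, 0 < x → x < π → x ∈ Lset u t₀ ∨ x ∈ Rset u t₀ := by
    intro x h1 h2
    by_contra h3
    push_neg at h3
    exact h3.2 (hcon x h1 h2 h3.1)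
  set U : Set ℝ := {y | ∃ ε > 0, ∀ z : ℝ, |z - y| < ε → z ∈ Lset u t₀} with hU
  set V : Set ℝ := {y | ∃ ε > 0, ∀ z : ℝ, |z - y| < ε → z ∈ Rset u t₀} with hV
  have hUopen : IsOpen U := by
    rw [Metric.isOpen_iff]
    rintro y ⟨ε, hε, h⟩
    refine ⟨ε/2, by positivity, fun y' hy' => ?_⟩
    rw [Metric.mem_ball, Real.dist_eq] at hy'
    refine ⟨ε/2, by positivity, fun z hz => h z ?_⟩
    calc |z - y| = |(z - y') + (y' - y)| := by ring_nf
      _ ≤ |z - y'| + |y' - y| := abs_add_le _ _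
      _ < ε := by linarith
  have hVopen : IsOpen V := by
    rw [Metric.isOpen_iff]
    rintro y ⟨ε, hε, h⟩
    refine ⟨ε/2, by positivity, fun y' hy' => ?_⟩
    rw [Metric.mem_ball, Real.dist_eq] at hy'
    refine ⟨ε/2, by positivity, fun z hz => h z ?_⟩
    calc |z - y| = |(z - y') + (y' - y)| := by ring_nf
      _ ≤ |z - y'| + |y' - y| := abs_add_le _ _
      _ < ε := by linarith
  have hsubU : U ⊆ Lset u t₀ := by
    rintro y ⟨ε, hε, h⟩
    exact h y (by simpa using hε)
  have hsubV : V ⊆ Rset u t₀ := by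
    rintro y ⟨ε, hε, h⟩
    exact h y (by simpa using hε)
  have hIooUV : Ioo 0 π ⊆ U ∪ V := by
    intro y hy
    rcases hcover y hy.1 hy.2 with h | h
    · left
      obtain ⟨ε, hε, h2⟩ := Lset_nbhd hu hy.1 h
      exact ⟨ε, hε, h2⟩
    · right
      obtain ⟨ε, hε, h2⟩ := Rset_nbhd hu hy.2 h
      exact ⟨ε, hε, h2⟩
  obtain ⟨δL, hδL, hL⟩ := Lset_near_zero hu t₀
  obtain ⟨δR, hδR, hR⟩ := Rset_near_pi hu t₀
  have hπ : (0:ℝ) < π := Real.pi_pos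
  -- a point of Ioo ∩ U
  set xL : ℝ := min δL π / 2 with hxL
  have hxL1 : 0 < xL := by positivity
  have hxL2 : xL < δL := by
    rw [hxL]; have := min_le_left δL π; linarith [lt_min hδL hπ]
  have hxL3 : xL < π := by
    rw [hxL]; have := min_le_right δL π; linarith
  have hxLU : xL ∈ U := by
    obtain ⟨ε, hε, h2⟩ := Lset_nbhd hu hxL1 (hL xL hxL1 hxL2)
    exact ⟨ε, hε, h2⟩
  -- a point of Ioo ∩ V
  set xR : ℝ := π - min δR π / 2 with hxR
  have hm : 0 < min δR π / 2 := by positivity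
  have hxR1 : xR < π := by rw [hxR]; linarith
  have hxR2 : π - δR < xR := by
    rw [hxR]; have := min_le_left δR π; linarith [lt_min hδR hπ]
  have hxR3 : 0 < xR := by
    rw [hxR]; have := min_le_right δR π; linarith
  have hxRV : xR ∈ V := by
    obtain ⟨ε, hε, h2⟩ := Rset_nbhd hu hxR1 (hR xR hxR2 hxR1)
    exact ⟨ε, hε, h2⟩
  have hpre : IsPreconnected (Ioo (0:ℝ) π) := isPreconnected_Ioo
  obtain ⟨y, hy1, hy2, hy3⟩ := hpre U V hUopen hVopen hIooUV
    ⟨xL, ⟨hxL1, hxL3⟩, hxLU⟩ ⟨xR, ⟨hxR3, hxR1⟩, hxRV⟩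
  exact LR_disjoint hu hy1.1 hy1.2 ⟨hsubU hy2, hsubV hy3⟩

end InvPend

open InvPend

/-- For any control `u` (continuous in all variables, locally Lipschitz in `(q,p)`) and any
`t₀`, there is an initial condition `(q₀,p₀)` with `0 < q₀ < π` such that every solution of
`q̇ = p, ṗ = u(q,p,t)·sin q − cos q` starting there at time `t₀` satisfies `0 < q(t) < π`
for all `t ≥ t₀` in its interval of existence: the pendulum never falls. -/
theorem inverted_pendulum_exists_never_falling_solution
    (u : ℝ → ℝ → ℝ → ℝ)
    (hu_cont : Continuous fun x : ℝ × ℝ × ℝ => u x.1 x.2.1 x.2.2)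
    (hu_lip : ∀ K : Set (ℝ × ℝ × ℝ), IsCompact K → ∃ L : ℝ,
      ∀ a ∈ K, ∀ b ∈ K, a.2.2 = b.2.2 →
        |u a.1 a.2.1 a.2.2 - u b.1 b.2.1 b.2.2| ≤
          L * dist ((a.1, a.2.1) : ℝ × ℝ) ((b.1, b.2.1) : ℝ × ℝ))
    (t₀ : ℝ) :
    ∃ q₀ p₀ : ℝ, 0 < q₀ ∧ q₀ < π ∧
      ∀ I : Set ℝ, t₀ ∈ I → I.OrdConnected →
        ∀ q p : ℝ → ℝ,
          (∀ t ∈ I, HasDerivWithinAt q (p t) I t) →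
          (∀ t ∈ I, HasDerivWithinAt p
            (u (q t) (p t) t * sin (q t) - cos (q t)) I t) →
          q t₀ = q₀ → p t₀ = p₀ →
          ∀ t ∈ I, t₀ ≤ t → 0 < q t ∧ q t < π := by
  have hu : Adm u := ⟨hu_cont, hu_lip⟩
  obtain ⟨x, hx0, hxπ, hxL, hxR⟩ := exists_good_point hu t₀
  refine ⟨x, 0, hx0, hxπ, ?_⟩
  intro I htI hIconn q p hq hp hq0 hp0 t ht htt
  by_contra hcon
  have hb : q t ∈ Iic 0 ∪ Ici π := by
    rcases le_or_gt (q t) 0 with h0 | h0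
    · exact Or.inl h0
    rcases le_or_gt π (q t) with h1 | h1
    · exact Or.inr h1
    · exact absurd ⟨h0, h1⟩ hcon
  set f : ℝ → ℝ × ℝ := fun s => (q s, p s) with hfdef
  have hIsub : Icc t₀ t ⊆ I := hIconn.out htI ht
  have hfsol : IsSol u t₀ t f := by
    intro s hs
    have h1 := (hq s (hIsub hs)).mono hIsub
    have h2 := (hp s (hIsub hs)).mono hIsub
    exact h1.prodMk h2
  have hqcont : ContinuousOn (fun s => (f s).1) (Icc t₀ t) :=
    fun s hs => (hdw_fst (hfsol s hs)).continuousWithinAt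
  obtain ⟨T, hTmem, hTA, hTmin⟩ := first_exit htt hqcont
    (isClosed_Iic.union isClosed_Ici) hb
  have hbefore : ∀ s, t₀ ≤ s → s < T → 0 < q s ∧ q s < π := by
    intro s h1 h2
    have h3 := hTmin s h1 h2
    simp only [mem_union, mem_Iic, mem_Ici, not_or, not_le] at h3
    exact h3
  have hf0 : f t₀ = ((x, 0) : ℝ × ℝ) := by
    rw [hfdef]; simp only [hq0, hp0]
  have hfsolT : IsSol u t₀ T f := hfsol.mono (Icc_subset_Icc le_rfl hTmem.2)
  rcases hTA with hA | hA
  · refine hxL ⟨T, hTmem.1, f, hfsolT, hf0, hA, ?_⟩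
    intro s hs
    rcases eq_or_lt_of_le hs.2 with h1 | h1
    · show q s < π
      rw [h1]
      have : q T ≤ 0 := hA
      linarith [Real.pi_pos]
    · exact (hbefore s hs.1 h1).2
  · refine hxR ⟨T, hTmem.1, f, hfsolT, hf0, hA, ?_⟩
    intro s hs
    rcases eq_or_lt_of_le hs.2 with h1 | h1
    · show 0 < q s
      rw [h1]
      have : π ≤ q T := hA
      linarith [Real.pi_pos]
    · exact (hbefore s hs.1 h1).1
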